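/- For every c ∈ (0,1), the acceptance region of the maximum p-value test with K = 2 studies, namely the set { (z₁, z₂) ∈ ℝ² : max(p(z₁), p(z₂)) > c }, where p(z) = 2(1 − Φ(|z|)), is not a convex subset of ℝ². -/
import Mathlib

open MeasureTheory Set Filter

/-- The standard normal density φ(t) = (1/√(2π))·exp(−t²/2). -/
noncomputable def stdNormalPDF (t : ℝ) : ℝ :=
  (Real.sqrt (2 * Real.pi))⁻¹ * Real.exp (-t ^ 2 / 2)

/-- The standard normal cumulative distribution function Φ(t) = ∫_{−∞}^t φ(s) ds. -/
noncomputable def stdNormalCDF (t : ℝ) : ℝ :=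
  ∫ s in Set.Iic t, stdNormalPDF s

/-- The two-sided p-value function p(z) = 2(1 − Φ(|z|)). -/
noncomputable def pValue (z : ℝ) : ℝ := 2 * (1 - stdNormalCDF |z|)

lemma stdNormalPDF_eq_gaussian : stdNormalPDF = ProbabilityTheory.gaussianPDFReal 0 1 := by
  ext x
  simp [stdNormalPDF, ProbabilityTheory.gaussianPDFReal]

lemma stdNormalPDF_integrable : Integrable stdNormalPDF := by
  rw [stdNormalPDF_eq_gaussian]
  exact ProbabilityTheory.integrable_gaussianPDFReal 0 1

lemma stdNormalPDF_integral_eq_one : ∫ x, stdNormalPDF x = 1 := by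
  rw [stdNormalPDF_eq_gaussian]
  exact ProbabilityTheory.integral_gaussianPDFReal_eq_one 0 one_ne_zero

lemma stdNormalCDF_zero : stdNormalCDF 0 = 1 / 2 := by
  have hsymm : stdNormalCDF 0 = ∫ x in Set.Ioi (0:ℝ), stdNormalPDF x := by
    rw [stdNormalCDF, ← neg_zero, ← integral_comp_neg_Iic, neg_zero]
    refine setIntegral_congr_fun measurableSet_Iic (fun x _ => ?_)
    simp [stdNormalPDF, neg_sq]
  have hsum : stdNormalCDF 0 + ∫ x in Set.Ioi (0:ℝ), stdNormalPDF x = 1 := by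
    rw [stdNormalCDF,
      ← setIntegral_union (Iic_disjoint_Ioi le_rfl) measurableSet_Ioi
        stdNormalPDF_integrable.integrableOn stdNormalPDF_integrable.integrableOn,
      Iic_union_Ioi, setIntegral_univ, stdNormalPDF_integral_eq_one]
  rw [hsymm] at hsum ⊢
  linarith

lemma stdNormalCDF_tendsto : Tendsto stdNormalCDF atTop (nhds 1) := by
  have h := tendsto_setIntegral_of_monotone (μ := (volume : Measure ℝ))
    (f := stdNormalPDF) (s := fun t : ℝ => Set.Iic t)
    (fun t => measurableSet_Iic) (fun a b hab => Iic_subset_Iic.mpr hab)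
    (by rw [iUnion_Iic]; exact stdNormalPDF_integrable.integrableOn)
  rw [iUnion_Iic, setIntegral_univ, stdNormalPDF_integral_eq_one] at h
  exact h

lemma pValue_zero : pValue 0 = 1 := by
  simp [pValue, stdNormalCDF_zero]
  norm_num

/-- For every c ∈ (0,1), the acceptance region of the maximum p-value test with K = 2
studies, { (z₁, z₂) ∈ ℝ² : max(p(z₁), p(z₂)) > c }, is not a convex subset of ℝ². -/
theorem stmt_7 (c : ℝ) (hc : c ∈ Set.Ioo (0 : ℝ) 1) :
    ¬ Convex ℝ {z : ℝ × ℝ | max (pValue z.1) (pValue z.2) > c} := by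
  intro hconv
  obtain ⟨hc0, hc1⟩ := hc
  -- find t ≥ 0 with pValue t ≤ c
  have hlt : (1 : ℝ) - c / 2 < 1 := by linarith
  have hev : ∀ᶠ t in atTop, stdNormalCDF t > 1 - c / 2 :=
    stdNormalCDF_tendsto.eventually (eventually_gt_nhds hlt)
  obtain ⟨t, ht0, htC⟩ := ((eventually_ge_atTop (0:ℝ)).and hev).exists
  have htp : pValue t < c := by
    have : |t| = t := abs_of_nonneg ht0
    rw [pValue, this]
    linarith
  -- the two points
  have hmem1 : ((0 : ℝ), 2 * t) ∈ {z : ℝ × ℝ | max (pValue z.1) (pValue z.2) > c} := by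
    simp only [Set.mem_setOf_eq]
    calc c < 1 := hc1
    _ = pValue 0 := pValue_zero.symm
    _ ≤ max (pValue 0) (pValue (2 * t)) := le_max_left _ _
  have hmem2 : ((2 * t : ℝ), (0 : ℝ)) ∈ {z : ℝ × ℝ | max (pValue z.1) (pValue z.2) > c} := by
    simp only [Set.mem_setOf_eq]
    calc c < 1 := hc1
    _ = pValue 0 := pValue_zero.symm
    _ ≤ max (pValue (2 * t)) (pValue 0) := le_max_right _ _
  have hmid := hconv hmem1 hmem2 (by norm_num : (0:ℝ) ≤ 1/2)
    (by norm_num : (0:ℝ) ≤ 1/2) (by norm_num : (1:ℝ)/2 + 1/2 = 1)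
  have heq : (1/2 : ℝ) • ((0 : ℝ), 2 * t) + (1/2 : ℝ) • ((2 * t : ℝ), (0 : ℝ)) = (t, t) := by
    simp [Prod.ext_iff]
  rw [heq] at hmid
  simp only [Set.mem_setOf_eq, max_self] at hmid
  linarith
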